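/- Let X have at least two elements and φ : Γ → Γ. If φ is not quasi-periodic then the set-theoretical entropy of σ_φ is infinite, and if φ is quasi-periodic then it is zero; thus ent_set(σ_φ) ∈ {0, ∞}. -/

import Mathlib

open scoped ENNReal

noncomputable def entSet {A : Type*} (g : A → A) : ℕ∞ :=
  sSup {c : ℕ∞ | ∃ k : ℕ, c = (k : ℕ∞) ∧ ∃ a : Fin k → A,
    (∀ i, Function.Injective fun n : ℕ => g^[n + 1] (a i)) ∧
    ∀ i j, i ≠ j → Disjoint (Set.range fun n : ℕ => g^[n + 1] (a i))
      (Set.range fun n : ℕ => g^[n + 1] (a j))}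

namespace EntProof


open Function

variable {X Γ : Type*}

lemma shift_iter (φ : Γ → Γ) (n : ℕ) (y : Γ → X) :
    (fun y : Γ → X => y ∘ φ)^[n] y = y ∘ φ^[n] := by
  induction n with
  | zero => rfl
  | succ n ih =>
      rw [Function.iterate_succ_apply', ih]
      rfl

lemma entSet_eq_top_of {A : Type*} (g : A → A)
    (H : ∀ k : ℕ, ∃ a : Fin k → A, ∀ i j (n m : ℕ),
      g^[n+1] (a i) = g^[m+1] (a j) → i = j ∧ n = m) :
    entSet g = ⊤ := by
  have hle : ∀ k : ℕ, (k : ℕ∞) ≤ entSet g := by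
    intro k
    obtain ⟨a, ha⟩ := H k
    apply le_sSup
    refine ⟨k, rfl, a, ?_, ?_⟩
    · intro i n m hnm
      exact (ha i i n m hnm).2
    · intro i j hij
      rw [Set.disjoint_left]
      rintro z ⟨n, hn⟩ ⟨m, hm⟩
      exact hij (ha i j n m (hn.trans hm.symm)).1
  by_contra hx
  obtain ⟨n, hn⟩ := WithTop.ne_top_iff_exists.mp hx
  rw [show (WithTop.some n : ℕ∞) = ((n:ℕ):ℕ∞) from congrFun ENat.some_eq_coe n] at hn
  have h2 : n + 1 ≤ n := by
    have := hle (n+1)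
    rw [← hn] at this
    exact_mod_cast this
  omega

lemma entSet_eq_zero_of_qp (φ : Γ → Γ) [Nonempty (Γ → X)]
    (hqp : ∃ n m : ℕ, 1 ≤ m ∧ m < n ∧ φ^[n] = φ^[m]) :
    entSet (fun y : Γ → X => y ∘ φ) = 0 := by
  obtain ⟨n, m, hm1, hmn, hphi⟩ := hqp
  apply le_antisymm _ (zero_le)
  apply sSup_le
  rintro c ⟨k, rfl, a, hinj, -⟩
  rcases Nat.eq_zero_or_pos k with hk | hk
  · subst hk; simp
  · exfalso
    have i0 : Fin k := ⟨0, hk⟩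
    have h1 : (fun t : ℕ => (fun y : Γ → X => y ∘ φ)^[t+1] (a i0)) (n-1)
        = (fun t : ℕ => (fun y : Γ → X => y ∘ φ)^[t+1] (a i0)) (m-1) := by
      simp only [shift_iter]
      rw [show n - 1 + 1 = n by omega, show m - 1 + 1 = m by omega, hphi]
    have := hinj i0 h1
    omega



/-- Block sets: `t` lies in the block `[B^s, B^s + i]` for some `s ≥ 1`. -/
def Sblk (B i t : ℕ) : Prop := ∃ s, 1 ≤ s ∧ B^s ≤ t ∧ t ≤ B^s + i

lemma pow_gap {k : ℕ} (s : ℕ) (hs : 1 ≤ s) : (k+2)^s + k < (k+2)^(s+1) := by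
  have h2 : k+2 ≤ (k+2)^s := Nat.le_self_pow (by omega) _
  have h3 : (k+2)^(s+1) = (k+2)^s * (k+2) := pow_succ _ _
  nlinarith

lemma pow_lt_pow_iff' {k u v : ℕ} : (k+2)^u < (k+2)^v ↔ u < v :=
  Nat.pow_lt_pow_iff_right (by omega)

/-- uniqueness of blocks: a point in two blocks forces same block index. -/
lemma block_unique {k i j u u' t : ℕ} (hi : i < k) (hj : j < k)
    (hu : 1 ≤ u) (hu' : 1 ≤ u')
    (h1 : (k+2)^u ≤ t) (h2 : t ≤ (k+2)^u + i)
    (h3 : (k+2)^u' ≤ t) (h4 : t ≤ (k+2)^u' + j) : u = u' := by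
  rcases lt_trichotomy u u' with h | h | h
  · exfalso
    have g := pow_gap (k := k) u hu
    have : (k+2)^(u+1) ≤ (k+2)^u' := Nat.pow_le_pow_right (by omega) (by omega)
    omega
  · exact h
  · exfalso
    have g := pow_gap (k := k) u' hu'
    have : (k+2)^(u'+1) ≤ (k+2)^u := Nat.pow_le_pow_right (by omega) (by omega)
    omega

/-- Main combinatorial lemma: shifted block-set containments force equality. -/
lemma Sblk_rigid {k i j d r : ℕ} (hi : i < k) (hj : j < k)
    (h : ∀ e, r ≤ e → (Sblk (k+2) i e ↔ Sblk (k+2) j (e + d))) :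
    i = j ∧ d = 0 := by
  have main : ∀ s, 1 ≤ s → r + 1 ≤ (k+2) ^ s →
      (∃ u, 1 ≤ u ∧ (k+2) ^ u = (k+2) ^ s + d) ∧ i = j := by
    intro s hs hrs
    obtain ⟨u, hu1, hu2, hu3⟩ := (h ((k+2) ^ s) (by omega)).mp ⟨s, hs, le_refl _, by omega⟩
    have hstart : (k+2) ^ u = (k+2) ^ s + d := by
      by_contra hne
      have hlt : (k+2) ^ u < (k+2) ^ s + d := by omega
      have hmem : Sblk (k+2) j (((k+2) ^ s - 1) + d) := ⟨u, hu1, by omega, by omega⟩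
      obtain ⟨w, hw1, hw2, hw3⟩ := (h ((k+2) ^ s - 1) (by omega)).mpr hmem
      have h1w : 1 ≤ (k+2) ^ w := Nat.one_le_pow _ _ (by omega)
      have hws : w < s := by
        rw [← pow_lt_pow_iff' (k := k)]
        omega
      have h2 : (k+2) ^ (w+1) ≤ (k+2) ^ s := Nat.pow_le_pow_right (by omega) (by omega)
      have g := pow_gap (k := k) w hw1
      omega
    refine ⟨⟨u, hu1, hstart⟩, ?_⟩
    have hij1 : i ≤ j := by
      obtain ⟨w, hw1, hw2, hw3⟩ := (h ((k+2) ^ s + i) (by omega)).mp ⟨s, hs, by omega, le_refl _⟩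
      have hweq : w = u := block_unique hj hi hw1 hu1 hw2 hw3 (by omega) (by omega)
      subst hweq
      omega
    have hij2 : j ≤ i := by
      by_contra hc
      have hmem : Sblk (k+2) j (((k+2) ^ s + i + 1) + d) := ⟨u, hu1, by omega, by omega⟩
      obtain ⟨w, hw1, hw2, hw3⟩ := (h ((k+2) ^ s + i + 1) (by omega)).mpr hmem
      have g := pow_gap (k := k) s hs
      have hws : w < s + 1 := by
        rw [← pow_lt_pow_iff' (k := k)]
        omega
      have hsw : s < w := by
        rw [← pow_lt_pow_iff' (k := k)]
        omega
      omega
    omega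
  have hpow : r + 1 ≤ (k+2) ^ (r + 1) := by
    have : r + 1 < (k+2) ^ (r + 1) := Nat.lt_pow_self (show 1 < k+2 by omega)
    omega
  obtain ⟨⟨u1, hu11, hu12⟩, hij⟩ := main (r+1) (by omega) hpow
  have hpow2 : r + 1 ≤ (k+2) ^ (r + 2) :=
    hpow.trans (Nat.pow_le_pow_right (by omega) (by omega))
  obtain ⟨⟨u2, hu21, hu22⟩, -⟩ := main (r+2) (by omega) hpow2
  refine ⟨hij, ?_⟩
  by_contra hd
  have h1 : (k+2) ^ (r+1) < (k+2) ^ u1 := by omega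
  have hru1 : r + 1 < u1 := pow_lt_pow_iff'.mp h1
  have hB1 : (k+2) ^ (r+2) ≤ (k+2) ^ u1 := Nat.pow_le_pow_right (by omega) (by omega)
  have h2B : 2 * (k+2) ^ u1 ≤ (k+2) ^ (u1+1) := by
    have h3 : (k+2)^(u1+1) = (k+2)^u1 * (k+2) := pow_succ _ _
    nlinarith
  have hp1 : 1 ≤ (k+2) ^ (r+1) := Nat.one_le_pow _ _ (by omega)
  have hlt : (k+2) ^ u2 < (k+2) ^ (u1 + 1) := by omega
  have hgt : (k+2) ^ u1 < (k+2) ^ u2 := by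
    have : (k+2) ^ (r+1) < (k+2) ^ (r+2) := pow_lt_pow_iff'.mpr (by omega)
    omega
  have l1 := pow_lt_pow_iff'.mp hlt
  have l2 := pow_lt_pow_iff'.mp hgt
  omega



lemma zcore {q k i j : ℕ} (hq : 4*k+5 < q) (hi : i < k) (hj : j < k) (c : ZMod q)
    (H : ∀ x : ZMod q, (x = 0 ∨ x = ((2*(i+1) : ℕ) : ZMod q)) ↔
      (x + c = 0 ∨ x + c = ((2*(j+1) : ℕ) : ZMod q))) :
    i = j ∧ c = 0 := by
  haveI : NeZero q := ⟨by omega⟩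
  set u : ZMod q := ((2*(i+1) : ℕ) : ZMod q) with hu
  set v : ZMod q := ((2*(j+1) : ℕ) : ZMod q) with hv
  have hu0 : u ≠ 0 := by
    rw [hu, Ne, ZMod.natCast_eq_zero_iff]
    intro hdvd
    have := Nat.le_of_dvd (by omega) hdvd
    omega
  have hv0 : v ≠ 0 := by
    rw [hv, Ne, ZMod.natCast_eq_zero_iff]
    intro hdvd
    have := Nat.le_of_dvd (by omega) hdvd
    omega
  have huv : u + v ≠ 0 := by
    rw [hu, hv, ← Nat.cast_add, Ne, ZMod.natCast_eq_zero_iff]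
    intro hdvd
    have := Nat.le_of_dvd (by omega) hdvd
    omega
  have hc : c = 0 ∨ c = v := by
    have := (H 0).mp (Or.inl rfl)
    simpa using this
  rcases hc with hc | hc
  · subst hc
    have := (H u).mp (Or.inr rfl)
    simp only [add_zero] at this
    rcases this with h | h
    · exact absurd h hu0
    · -- u = v : conclude i = j
      rw [hu, hv, ZMod.natCast_eq_natCast_iff] at h
      have h1 : 2*(i+1) % q = 2*(j+1) % q := h
      rw [Nat.mod_eq_of_lt (by omega), Nat.mod_eq_of_lt (by omega)] at h1
      exact ⟨by omega, rfl⟩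
  · exfalso
    subst hc
    have := (H u).mp (Or.inr rfl)
    rcases this with h | h
    · exact huv h
    · have : u = 0 := by
        have := add_right_cancel (a := u) (b := v) (c := 0) (by rw [zero_add]; exact h)
        exact this
      exact hu0 this

def Per {Γ : Type*} (φ : Γ → Γ) (δ : Γ) : Prop := ∃ q, 0 < q ∧ φ^[q] δ = δ

lemma Per.iter {Γ : Type*} {φ : Γ → Γ} {δ : Γ} (h : Per φ δ) (n : ℕ) : Per φ (φ^[n] δ) := by
  obtain ⟨q, hq, hqe⟩ := h
  refine ⟨q, hq, ?_⟩
  rw [← Function.iterate_add_apply, Nat.add_comm, Function.iterate_add_apply, hqe]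

lemma ite_eq_ite_iff {X : Type*} {P Q : Prop} [Decidable P] [Decidable Q] {x1 x0 : X}
    (hx : x1 ≠ x0)
    (h : (if P then x1 else x0) = (if Q then x1 else x0)) : P ↔ Q := by
  by_cases hP : P <;> by_cases hQ : Q <;> simp_all

section main
open Function
variable {X Γ : Type*}
/-- Case analysis helper: from shifted-iff of `Sblk`, conclude equality, one-sided. -/
lemma sblk_conc {k : ℕ} {i j : Fin k} {n m : ℕ} (hmn : m ≤ n)
    (hS : ∀ t, Sblk (k+2) (i:ℕ) (n+1+t) ↔ Sblk (k+2) (j:ℕ) (m+1+t)) : i = j ∧ n = m := by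
  have h : ∀ e, m+1 ≤ e → (Sblk (k+2) (j:ℕ) e ↔ Sblk (k+2) (i:ℕ) (e + (n-m))) := by
    intro e he
    have h1 := hS (e - (m+1))
    rw [show n+1+(e-(m+1)) = e + (n-m) by omega, show m+1+(e-(m+1)) = e by omega] at h1
    exact h1.symm
  obtain ⟨hij, hd⟩ := Sblk_rigid j.isLt i.isLt h
  exact ⟨(Fin.ext hij).symm, by omega⟩

/-- Case A: some point has infinite orbit. -/
lemma caseA {x0 x1 : X} (hx : x1 ≠ x0) (φ : Γ → Γ) {γ : Γ}
    (hγ : Function.Injective fun t : ℕ => φ^[t] γ) (k : ℕ) :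
    ∃ a : Fin k → (Γ → X), ∀ (i j : Fin k) (n m : ℕ),
      (a i) ∘ φ^[n+1] = (a j) ∘ φ^[m+1] → i = j ∧ n = m := by
  classical
  refine ⟨fun i δ => if ∃ t, φ^[t] γ = δ ∧ Sblk (k+2) (i:ℕ) t then x1 else x0, ?_⟩
  have hcond : ∀ (i : Fin k) (u : ℕ),
      (∃ t, φ^[t] γ = φ^[u] γ ∧ Sblk (k+2) (i:ℕ) t) ↔ Sblk (k+2) (i:ℕ) u := by
    intro i u
    constructor
    · rintro ⟨t, ht, hS⟩
      rwa [hγ ht] at hS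
    · exact fun hS => ⟨u, rfl, hS⟩
  intro i j n m hyp
  have hS : ∀ t, Sblk (k+2) (i:ℕ) (n+1+t) ↔ Sblk (k+2) (j:ℕ) (m+1+t) := by
    intro t
    have h1 := congrFun hyp (φ^[t] γ)
    simp only [comp_apply, ← Function.iterate_add_apply] at h1
    have h2 := ite_eq_ite_iff hx h1
    rw [hcond, hcond] at h2
    exact h2
  rcases le_total m n with hmn | hmn
  · exact sblk_conc hmn hS
  · obtain ⟨h1, h2⟩ := sblk_conc hmn (fun t => (hS t).symm)
    exact ⟨h1.symm, h2.symm⟩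

/-- Case B1: all orbits eventually periodic, unbounded pre-periods. -/
lemma caseB1 {x0 x1 : X} (hx : x1 ≠ x0) (φ : Γ → Γ)
    (hfin : ∀ γ : Γ, ∃ r, Per φ (φ^[r] γ))
    (hunb : ∀ N, ∃ γ, ∀ r < N, ¬ Per φ (φ^[r] γ)) (k : ℕ) :
    ∃ a : Fin k → (Γ → X), ∀ (i j : Fin k) (n m : ℕ),
      (a i) ∘ φ^[n+1] = (a j) ∘ φ^[m+1] → i = j ∧ n = m := by
  classical
  have hρ_iff : ∀ γ r, Per φ (φ^[r] γ) ↔ Nat.find (hfin γ) ≤ r := by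
    intro γ r
    constructor
    · intro h
      by_contra hlt
      push_neg at hlt
      exact Nat.find_min (hfin γ) hlt h
    · intro h
      have hspec := Nat.find_spec (hfin γ)
      have := (hspec.iter (r - Nat.find (hfin γ)))
      rwa [← Function.iterate_add_apply, show r - Nat.find (hfin γ) + Nat.find (hfin γ) = r by omega] at this
  have hρ_shift : ∀ γ n, Nat.find (hfin (φ^[n] γ)) = Nat.find (hfin γ) - n := by
    intro γ n
    apply le_antisymm
    · apply Nat.find_min'
      rw [← Function.iterate_add_apply]
      exact (hρ_iff γ _).mpr (by omega)
    · have hspec := Nat.find_spec (hfin (φ^[n] γ))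
      rw [← Function.iterate_add_apply] at hspec
      have := (hρ_iff γ _).mp hspec
      omega
  have hsurj : ∀ v, ∃ γ, Nat.find (hfin γ) = v := by
    intro v
    obtain ⟨γ, hγ⟩ := hunb v
    have hv : v ≤ Nat.find (hfin γ) := by
      by_contra hlt
      exact hγ _ (by omega) (Nat.find_spec (hfin γ))
    refine ⟨φ^[Nat.find (hfin γ) - v] γ, by rw [hρ_shift]; omega⟩
  refine ⟨fun i δ => if Sblk (k+2) (i:ℕ) (Nat.find (hfin δ)) then x1 else x0, ?_⟩
  intro i j n m hyp
  have hS : ∀ v, Sblk (k+2) (i:ℕ) (v - (n+1)) ↔ Sblk (k+2) (j:ℕ) (v - (m+1)) := by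
    intro v
    obtain ⟨γ, hγv⟩ := hsurj v
    have h1 := congrFun hyp γ
    simp only [comp_apply] at h1
    have h2 := ite_eq_ite_iff hx h1
    rwa [hρ_shift, hρ_shift, hγv] at h2
  rcases le_total m n with hmn | hmn
  · have h' : ∀ e, 0 ≤ e → (Sblk (k+2) (i:ℕ) e ↔ Sblk (k+2) (j:ℕ) (e + (n-m))) := by
      intro e _
      have := hS (n+1+e)
      rwa [show n+1+e - (n+1) = e by omega, show n+1+e - (m+1) = e + (n-m) by omega] at this
    obtain ⟨hij, hd⟩ := Sblk_rigid i.isLt j.isLt h'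
    exact ⟨Fin.ext hij, by omega⟩
  · have h' : ∀ e, 0 ≤ e → (Sblk (k+2) (j:ℕ) e ↔ Sblk (k+2) (i:ℕ) (e + (m-n))) := by
      intro e _
      have := hS (m+1+e)
      rw [show m+1+e - (m+1) = e by omega, show m+1+e - (n+1) = e + (m-n) by omega] at this
      exact this.symm
    obtain ⟨hij, hd⟩ := Sblk_rigid j.isLt i.isLt h'
    exact ⟨(Fin.ext hij).symm, by omega⟩

lemma iter_mult {φ : Γ → Γ} {z : Γ} {q : ℕ} (h : φ^[q] z = z) (c : ℕ) : φ^[q*c] z = z := by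
  induction c with
  | zero => simp
  | succ c ih => rw [Nat.mul_succ, Function.iterate_add_apply, h, ih]

/-- minimal period of a periodic point -/
noncomputable def qm (φ : Γ → Γ) (δ : Γ) : ℕ := sInf {q | 0 < q ∧ φ^[q] δ = δ}

def orb (φ : Γ → Γ) (δ : Γ) : Set Γ := Set.range fun t => φ^[t] δ

lemma orb_self_mem (φ : Γ → Γ) (δ : Γ) : δ ∈ orb φ δ := ⟨0, rfl⟩

noncomputable def rep (φ : Γ → Γ) (δ : Γ) : Γ :=
  Set.Nonempty.some ⟨δ, orb_self_mem φ δ⟩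

noncomputable def cpos (φ : Γ → Γ) (δ : Γ) : ℕ := sInf {u | φ^[u] (rep φ δ) = δ}

lemma nonempty_some_congr {s t : Set Γ} (h : s = t) (hs : s.Nonempty) (ht : t.Nonempty) :
    hs.some = ht.some := by subst h; rfl

section cyc
variable {φ : Γ → Γ} {δ : Γ} (hδ : Per φ δ)

include hδ

lemma qm_pos : 0 < qm φ δ := (Nat.sInf_mem (s := {q | 0 < q ∧ φ^[q] δ = δ}) hδ).1

lemma qm_spec : φ^[qm φ δ] δ = δ := (Nat.sInf_mem (s := {q | 0 < q ∧ φ^[q] δ = δ}) hδ).2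

lemma qm_min {e : ℕ} (he : 0 < e) (h : φ^[e] δ = δ) : qm φ δ ≤ e :=
  Nat.sInf_le ⟨he, h⟩

lemma orb_shift (n : ℕ) : orb φ (φ^[n] δ) = orb φ δ := by
  apply Set.eq_of_subset_of_subset
  · rintro z ⟨t, rfl⟩
    refine ⟨t + n, ?_⟩
    show φ^[t + n] δ = φ^[t] (φ^[n] δ)
    exact Function.iterate_add_apply φ t n δ
  · rintro z ⟨t, rfl⟩
    refine ⟨t + qm φ δ * n - n, ?_⟩
    have hqn : n ≤ qm φ δ * n := Nat.le_mul_of_pos_left n (qm_pos hδ)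
    show φ^[t + qm φ δ * n - n] (φ^[n] δ) = φ^[t] δ
    rw [← Function.iterate_add_apply, show t + qm φ δ * n - n + n = t + qm φ δ * n by omega,
      Function.iterate_add_apply, iter_mult (qm_spec hδ) n]

lemma rep_shift (n : ℕ) : rep φ (φ^[n] δ) = rep φ δ := by
  unfold rep
  exact nonempty_some_congr (orb_shift hδ n) _ _

omit hδ in
lemma rep_mem : ∃ t, φ^[t] δ = rep φ δ :=
  Set.Nonempty.some_mem ⟨δ, orb_self_mem φ δ⟩

lemma cpos_ex : ∃ u, φ^[u] (rep φ δ) = δ := by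
  obtain ⟨t, ht⟩ := rep_mem (φ := φ) (δ := δ)
  refine ⟨qm φ δ * (t+1) - t, ?_⟩
  have hM : t + 1 ≤ qm φ δ * (t+1) := Nat.le_mul_of_pos_left _ (qm_pos hδ)
  rw [← ht, ← Function.iterate_add_apply,
    show qm φ δ * (t+1) - t + t = qm φ δ * (t+1) by omega]
  exact iter_mult (qm_spec hδ) (t+1)

lemma cpos_spec : φ^[cpos φ δ] (rep φ δ) = δ :=
  Nat.sInf_mem (s := {u | φ^[u] (rep φ δ) = δ}) (cpos_ex hδ)

lemma rep_per : φ^[qm φ δ] (rep φ δ) = rep φ δ := by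
  obtain ⟨t, ht⟩ := rep_mem (φ := φ) (δ := δ)
  rw [← ht, ← Function.iterate_add_apply, Nat.add_comm, Function.iterate_add_apply, qm_spec hδ]

lemma rep_min {e : ℕ} (h : φ^[e] (rep φ δ) = rep φ δ) : qm φ δ ∣ e := by
  have haux : ∀ e', 0 < e' → φ^[e'] (rep φ δ) = rep φ δ → qm φ δ ≤ e' := by
    intro e' he' h'
    apply qm_min hδ he'
    conv_lhs => rw [← cpos_spec hδ, ← Function.iterate_add_apply, Nat.add_comm,
      Function.iterate_add_apply, h']
    exact cpos_spec hδ
  rcases Nat.eq_zero_or_pos (e % qm φ δ) with hz | hpos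
  · omega
  · exfalso
    have hdecomp : φ^[e % qm φ δ] (rep φ δ) = rep φ δ := by
      conv_lhs => rw [← iter_mult (rep_per hδ) (e / qm φ δ), ← Function.iterate_add_apply,
        Nat.mod_add_div e (qm φ δ), h]
    have h1 := haux _ hpos hdecomp
    have hlt := Nat.mod_lt e (qm_pos hδ)
    omega

lemma cyc_cancel {u u' : ℕ} (h : φ^[u] (rep φ δ) = φ^[u'] (rep φ δ)) :
    u ≡ u' [MOD qm φ δ] := by
  have main : ∀ u u' : ℕ, u ≤ u' → φ^[u] (rep φ δ) = φ^[u'] (rep φ δ) →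
      u ≡ u' [MOD qm φ δ] := by
    intro u u' huu h
    have hM : u + 1 ≤ qm φ δ * (u + 1) := Nat.le_mul_of_pos_left _ (qm_pos hδ)
    have h1 : φ^[(qm φ δ * (u+1) - u) + u'] (rep φ δ) = rep φ δ := by
      rw [Function.iterate_add_apply, ← h, ← Function.iterate_add_apply,
        show qm φ δ * (u+1) - u + u = qm φ δ * (u+1) by omega]
      exact iter_mult (rep_per hδ) (u+1)
    have h2 := rep_min hδ h1
    have h3 : qm φ δ ∣ qm φ δ * (u + 1) := Dvd.intro _ rfl
    have h4 : qm φ δ ∣ u' - u := by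
      rw [show (qm φ δ * (u+1) - u) + u' = qm φ δ * (u+1) + (u' - u) by omega] at h2
      exact (Nat.dvd_add_right h3).mp h2
    exact (Nat.modEq_iff_dvd' huu).mpr h4
  rcases le_total u u' with huu | huu
  · exact main u u' huu h
  · exact (main u' u huu h.symm).symm

lemma qm_shift (n : ℕ) : qm φ (φ^[n] δ) = qm φ δ := by
  have hM : n ≤ qm φ δ * n := Nat.le_mul_of_pos_left _ (qm_pos hδ)
  have hδn : φ^[qm φ δ * n - n] (φ^[n] δ) = δ := by
    rw [← Function.iterate_add_apply, show qm φ δ * n - n + n = qm φ δ * n by omega]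
    exact iter_mult (qm_spec hδ) n
  apply le_antisymm
  · apply qm_min (hδ.iter n) (qm_pos hδ)
    rw [← Function.iterate_add_apply, Nat.add_comm, Function.iterate_add_apply, qm_spec hδ]
  · apply qm_min hδ (qm_pos (hδ.iter n))
    calc φ^[qm φ (φ^[n] δ)] δ
        = φ^[qm φ (φ^[n] δ)] (φ^[qm φ δ * n - n] (φ^[n] δ)) := by rw [hδn]
      _ = φ^[qm φ (φ^[n] δ) + (qm φ δ * n - n)] (φ^[n] δ) :=
          (Function.iterate_add_apply _ _ _ _).symm
      _ = φ^[(qm φ δ * n - n) + qm φ (φ^[n] δ)] (φ^[n] δ) := by rw [Nat.add_comm]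
      _ = φ^[qm φ δ * n - n] (φ^[qm φ (φ^[n] δ)] (φ^[n] δ)) := Function.iterate_add_apply _ _ _ _
      _ = φ^[qm φ δ * n - n] (φ^[n] δ) := by rw [qm_spec (hδ.iter n)]
      _ = δ := hδn

lemma cpos_shift (n : ℕ) : cpos φ (φ^[n] δ) ≡ cpos φ δ + n [MOD qm φ δ] := by
  apply cyc_cancel hδ
  have h1 : φ^[cpos φ (φ^[n] δ)] (rep φ δ) = φ^[n] δ := by
    have := cpos_spec (hδ.iter n)
    rwa [rep_shift hδ n] at this
  have h2 : φ^[cpos φ δ + n] (rep φ δ) = φ^[n] δ := by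
    rw [Nat.add_comm, Function.iterate_add_apply, cpos_spec hδ]
  rw [h1, h2]

end cyc

/-- Case B2: arbitrarily "incompatible" cycle lengths. -/
lemma caseB2 {x0 x1 : X} (hx : x1 ≠ x0) (φ : Γ → Γ)
    (hsupply : ∀ P, 1 ≤ P → ∃ δ, Per φ δ ∧ φ^[P] δ ≠ δ) (k : ℕ) :
    ∃ a : Fin k → (Γ → X), ∀ (i j : Fin k) (n m : ℕ),
      (a i) ∘ φ^[n+1] = (a j) ∘ φ^[m+1] → i = j ∧ n = m := by
  classical
  refine ⟨fun i δ => if (Per φ δ ∧ (cpos φ δ ≡ 0 [MOD qm φ δ] ∨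
      cpos φ δ ≡ 2*((i:ℕ)+1) [MOD qm φ δ])) then x1 else x0, ?_⟩
  intro i j n m hyp
  set D : ℕ := if n = m then 1 else (max n m - min n m) with hD
  have hD1 : 1 ≤ D := by
    rw [hD]; split
    · exact le_refl 1
    · next hne => omega
  obtain ⟨δ, hPer, hne⟩ := hsupply (D * Nat.factorial (4*k+5))
    (Nat.one_le_iff_ne_zero.mpr (by have := Nat.factorial_pos (4*k+5); positivity))
  have hqnd : ¬ qm φ δ ∣ D * Nat.factorial (4*k+5) := by
    intro hdvd
    apply hne
    obtain ⟨c, hc⟩ := hdvd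
    rw [hc]
    exact iter_mult (qm_spec hPer) c
  have hqbig : 4*k+5 < qm φ δ := by
    by_contra hle
    push_neg at hle
    exact hqnd (Dvd.dvd.mul_left (Nat.dvd_factorial (qm_pos hPer) hle) D)
  have hCiff : ∀ (i : Fin k) (N : ℕ),
      ((Per φ (φ^[N] δ) ∧ (cpos φ (φ^[N] δ) ≡ 0 [MOD qm φ (φ^[N] δ)] ∨
        cpos φ (φ^[N] δ) ≡ 2*((i:ℕ)+1) [MOD qm φ (φ^[N] δ)]))
      ↔ ((cpos φ δ + N) ≡ 0 [MOD qm φ δ] ∨ (cpos φ δ + N) ≡ 2*((i:ℕ)+1) [MOD qm φ δ])) := by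
    intro i N
    rw [qm_shift hPer N]
    have hshift := cpos_shift hPer N
    constructor
    · rintro ⟨-, h | h⟩
      · exact Or.inl (hshift.symm.trans h)
      · exact Or.inr (hshift.symm.trans h)
    · rintro (h | h)
      · exact ⟨hPer.iter N, Or.inl (hshift.trans h)⟩
      · exact ⟨hPer.iter N, Or.inr (hshift.trans h)⟩
  have HModEq : ∀ r : ℕ,
      ((cpos φ δ + (n+1+r)) ≡ 0 [MOD qm φ δ] ∨
        (cpos φ δ + (n+1+r)) ≡ 2*((i:ℕ)+1) [MOD qm φ δ])
      ↔ ((cpos φ δ + (m+1+r)) ≡ 0 [MOD qm φ δ] ∨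
        (cpos φ δ + (m+1+r)) ≡ 2*((j:ℕ)+1) [MOD qm φ δ]) := by
    intro r
    have h1 := congrFun hyp (φ^[r] δ)
    simp only [comp_apply, ← Function.iterate_add_apply] at h1
    have h2 := ite_eq_ite_iff hx h1
    rw [hCiff i (n+1+r), hCiff j (m+1+r)] at h2
    exact h2
  haveI : NeZero (qm φ δ) := ⟨by omega⟩
  set q : ℕ := qm φ δ with hq
  set p0 : ℕ := cpos φ δ with hp0
  have HZ : ∀ x : ZMod q, (x = 0 ∨ x = ((2*((i:ℕ)+1) : ℕ) : ZMod q)) ↔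
      (x + (((p0+m+1 : ℕ) : ZMod q) - ((p0+n+1 : ℕ) : ZMod q)) = 0 ∨
       x + (((p0+m+1 : ℕ) : ZMod q) - ((p0+n+1 : ℕ) : ZMod q)) = ((2*((j:ℕ)+1) : ℕ) : ZMod q)) := by
    intro x
    set A : ZMod q := ((p0+n+1 : ℕ) : ZMod q) with hA
    set B : ZMod q := ((p0+m+1 : ℕ) : ZMod q) with hB
    set r : ℕ := (x - A).val with hr
    have hrx : ((r : ℕ) : ZMod q) = x - A := ZMod.natCast_rightInverse (x - A)
    have hA1 : ((p0 + (n+1+r) : ℕ) : ZMod q) = A + (r : ZMod q) := by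
      rw [hA]; push_cast; ring
    have hB1 : ((p0 + (m+1+r) : ℕ) : ZMod q) = B + (r : ZMod q) := by
      rw [hB]; push_cast; ring
    have hcast1 : ((p0 + (n+1+r) : ℕ) : ZMod q) = x := by rw [hA1, hrx]; ring
    have hcast2 : ((p0 + (m+1+r) : ℕ) : ZMod q) = x + (B - A) := by rw [hB1, hrx]; ring
    have hME := HModEq r
    constructor
    · intro hx1
      have hnat : (p0 + (n+1+r)) ≡ 0 [MOD q] ∨ (p0 + (n+1+r)) ≡ 2*((i:ℕ)+1) [MOD q] := by
        rcases hx1 with h | h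
        · exact Or.inl ((ZMod.natCast_eq_natCast_iff _ _ _).mp (by rw [hcast1, h]; simp))
        · exact Or.inr ((ZMod.natCast_eq_natCast_iff _ _ _).mp (by rw [hcast1, h]))
      rcases hME.mp hnat with h | h
      · refine Or.inl ?_
        have h3 := (ZMod.natCast_eq_natCast_iff _ _ _).mpr h
        rw [hcast2] at h3
        simpa using h3
      · refine Or.inr ?_
        have h3 := (ZMod.natCast_eq_natCast_iff _ _ _).mpr h
        rwa [hcast2] at h3
    · intro hx1
      have hnat : (p0 + (m+1+r)) ≡ 0 [MOD q] ∨ (p0 + (m+1+r)) ≡ 2*((j:ℕ)+1) [MOD q] := by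
        rcases hx1 with h | h
        · exact Or.inl ((ZMod.natCast_eq_natCast_iff _ _ _).mp (by rw [hcast2, h]; simp))
        · exact Or.inr ((ZMod.natCast_eq_natCast_iff _ _ _).mp (by rw [hcast2, h]))
      rcases hME.mpr hnat with h | h
      · refine Or.inl ?_
        have h3 := (ZMod.natCast_eq_natCast_iff _ _ _).mpr h
        rw [hcast1] at h3
        simpa using h3
      · refine Or.inr ?_
        have h3 := (ZMod.natCast_eq_natCast_iff _ _ _).mpr h
        rwa [hcast1] at h3
  obtain ⟨hij, hc0⟩ := zcore hqbig i.isLt j.isLt _ HZ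
  have hnm : n = m := by
    have hAB : ((p0+m+1 : ℕ) : ZMod q) = ((p0+n+1 : ℕ) : ZMod q) := sub_eq_zero.mp hc0
    have hmod : (p0+m+1) ≡ (p0+n+1) [MOD q] := (ZMod.natCast_eq_natCast_iff _ _ _).mp hAB
    by_contra hnem
    rcases le_total n m with h | h
    · have hdvd : q ∣ (m - n) := by
        have h5 := (Nat.modEq_iff_dvd' (by omega)).mp hmod.symm
        rwa [show p0+m+1 - (p0+n+1) = m - n by omega] at h5
      apply hqnd
      rw [hD, if_neg hnem]
      exact Dvd.dvd.mul_right (hdvd.trans ⟨1, by omega⟩) _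
    · have hdvd : q ∣ (n - m) := by
        have h5 := (Nat.modEq_iff_dvd' (by omega)).mp hmod
        rwa [show p0+n+1 - (p0+m+1) = n - m by omega] at h5
      apply hqnd
      rw [hD, if_neg hnem]
      exact Dvd.dvd.mul_right (hdvd.trans ⟨1, by omega⟩) _
  exact ⟨Fin.ext hij, hnm⟩


end main
end EntProof

/-- The set-theoretical entropy of a generalized shift is `0` if `φ` is quasi-periodic
and `∞` otherwise; in particular it lies in `{0, ∞}`. -/
theorem entSet_genShift {X Γ : Type*} [Nontrivial X] [Nonempty Γ] (φ : Γ → Γ) :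
    ((∃ n m : ℕ, 1 ≤ m ∧ m < n ∧ φ^[n] = φ^[m]) →
        entSet (fun y : Γ → X => y ∘ φ) = 0) ∧
    ((¬ ∃ n m : ℕ, 1 ≤ m ∧ m < n ∧ φ^[n] = φ^[m]) →
        entSet (fun y : Γ → X => y ∘ φ) = ⊤) ∧
    (entSet (fun y : Γ → X => y ∘ φ) = 0 ∨ entSet (fun y : Γ → X => y ∘ φ) = ⊤) := by
  obtain ⟨x1, x0, hx⟩ := exists_pair_ne X
  have hqp0 : (∃ n m : ℕ, 1 ≤ m ∧ m < n ∧ φ^[n] = φ^[m]) →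
      entSet (fun y : Γ → X => y ∘ φ) = 0 := fun h => by
    haveI : Nonempty (Γ → X) := ⟨fun _ => x0⟩
    exact EntProof.entSet_eq_zero_of_qp φ h
  have htop : (¬ ∃ n m : ℕ, 1 ≤ m ∧ m < n ∧ φ^[n] = φ^[m]) →
      entSet (fun y : Γ → X => y ∘ φ) = ⊤ := by
    intro hnqp
    apply EntProof.entSet_eq_top_of
    intro k
    have hconv : ∀ (a : Fin k → (Γ → X)),
        (∀ (i j : Fin k) (n m : ℕ), (a i) ∘ φ^[n+1] = (a j) ∘ φ^[m+1] → i = j ∧ n = m) →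
        ∃ a : Fin k → (Γ → X), ∀ (i j : Fin k) (n m : ℕ),
          (fun y : Γ → X => y ∘ φ)^[n+1] (a i) = (fun y : Γ → X => y ∘ φ)^[m+1] (a j) →
            i = j ∧ n = m := by
      intro a ha
      refine ⟨a, fun i j n m h => ha i j n m ?_⟩
      rwa [EntProof.shift_iter, EntProof.shift_iter] at h
    by_cases hA : ∃ γ : Γ, Function.Injective fun t : ℕ => φ^[t] γ
    · obtain ⟨γ, hγ⟩ := hA
      obtain ⟨a, ha⟩ := EntProof.caseA hx φ hγ k
      exact hconv a ha
    · have hfin : ∀ γ : Γ, ∃ r, EntProof.Per φ (φ^[r] γ) := by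
        intro γ
        push_neg at hA
        obtain ⟨t, t', het, hne⟩ := Function.not_injective_iff.mp (hA γ)
        rcases Nat.lt_or_ge t t' with hlt | hge
        · exact ⟨t, ⟨t' - t, by omega, by
            rw [← Function.iterate_add_apply, show t' - t + t = t' by omega, het]⟩⟩
        · have hlt : t' < t := by omega
          exact ⟨t', ⟨t - t', by omega, by
            rw [← Function.iterate_add_apply, show t - t' + t' = t by omega, ← het]⟩⟩
      by_cases hB1 : ∀ N, ∃ γ, ∀ r, r < N → ¬ EntProof.Per φ (φ^[r] γ)
      · obtain ⟨a, ha⟩ := EntProof.caseB1 hx φ hfin hB1 k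
        exact hconv a ha
      · push_neg at hB1
        obtain ⟨N, hN⟩ := hB1
        have hsupply : ∀ P, 1 ≤ P → ∃ δ, EntProof.Per φ δ ∧ φ^[P] δ ≠ δ := by
          intro P hP
          have hne2 : φ^[N+1+P] ≠ φ^[N+1] := by
            intro hcontra
            exact hnqp ⟨N+1+P, N+1, by omega, by omega, hcontra⟩
          obtain ⟨γ, hγ⟩ := Function.ne_iff.mp hne2
          obtain ⟨r, hr, hPer⟩ := hN γ
          refine ⟨φ^[N+1] γ, ?_, ?_⟩
          · have := hPer.iter (N+1-r)
            rwa [← Function.iterate_add_apply, show N+1-r+r = N+1 by omega] at this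
          · intro hcontra
            apply hγ
            rw [show N+1+P = P + (N+1) by omega, Function.iterate_add_apply]
            exact hcontra
        obtain ⟨a, ha⟩ := EntProof.caseB2 hx φ hsupply k
        exact hconv a ha
  refine ⟨hqp0, htop, ?_⟩
  by_cases h : ∃ n m : ℕ, 1 ≤ m ∧ m < n ∧ φ^[n] = φ^[m]
  · exact Or.inl (hqp0 h)
  · exact Or.inr (htop h)
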